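/- arXiv:1306.0433 — 3 statements merged into one kernel-verified Lean document; each statement's English description precedes it below -/
import Mathlib

section
/- Let λ > 0, μ > 0, λ ≠ 1, and set D = (1 + λ − μ⁻¹)² + 4(1 − λ). If D < 0, then the only fixed points of Φ_{λ,μ} are (1, 0) and (1/λ, 0). If D ≥ 0 and μ ∉ {1, λ}, then the fixed points of Φ_{λ,μ} with y ≠ 0 are exactly the points (x, x − 1/μ) where x = ((μ⁻¹ − λ − 1) + √D)/(2(1 − λ)) or x = ((μ⁻¹ − λ − 1) − √D)/(2(1 − λ)). -/
noncomputable section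

/-- The planar R-S flip-flop model map `Φ_{λ,μ}(x,y) = (1 − x(λ(1−x) + y), μy(x − y))`. -/
def Phi (l m : ℝ) (p : ℝ × ℝ) : ℝ × ℝ :=
  (1 - p.1 * (l * (1 - p.1) + p.2), m * p.2 * (p.1 - p.2))

/-- The discriminant D = (1 + λ − μ⁻¹)² + 4(1 − λ). -/
def Ddisc (l m : ℝ) : ℝ := (1 + l - m⁻¹) ^ 2 + 4 * (1 - l)

/-- For λ > 0, μ > 0, λ ≠ 1: if D < 0 the only fixed points of Φ_{λ,μ} are (1,0) and
(1/λ,0); if D ≥ 0 and μ ∉ {1, λ}, the fixed points with y ≠ 0 are exactly the points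
`(x, x − 1/μ)` with `x = ((μ⁻¹ − λ − 1) ± √D)/(2(1 − λ))`. -/
theorem stmt_3 (l m : ℝ) (hl : 0 < l) (hm : 0 < m) (hl1 : l ≠ 1) :
    (Ddisc l m < 0 → ∀ p : ℝ × ℝ, Phi l m p = p → p = (1, 0) ∨ p = (1 / l, 0)) ∧
    (0 ≤ Ddisc l m → m ≠ 1 → m ≠ l →
      ∀ x y : ℝ, (Phi l m (x, y) = (x, y) ∧ y ≠ 0) ↔
        (y = x - 1 / m ∧
          (x = ((m⁻¹ - l - 1) + Real.sqrt (Ddisc l m)) / (2 * (1 - l)) ∨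
            x = ((m⁻¹ - l - 1) - Real.sqrt (Ddisc l m)) / (2 * (1 - l))))) := by
  have hm0 : m ≠ 0 := hm.ne'
  have hl0 : l ≠ 0 := hl.ne'
  have h1l : 1 - l ≠ 0 := sub_ne_zero.mpr (Ne.symm hl1)
  have hl1' : l - 1 ≠ 0 := sub_ne_zero.mpr hl1
  constructor
  · intro hD p hp
    obtain ⟨x, y⟩ := p
    simp only [Phi, Prod.mk.injEq] at hp
    obtain ⟨e1, e2⟩ := hp
    have hy : y = 0 := by
      by_contra hy
      have hxy : m * (x - y) - 1 = 0 := by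
        have h0 : y * (m * (x - y) - 1) = 0 := by linear_combination e2
        rcases mul_eq_zero.mp h0 with h | h
        · exact absurd h hy
        · exact h
      have hyv : y = x - 1/m := by
        field_simp
        field_simp at hxy
        linarith [hxy]
      rw [hyv] at e1
      have hQ : (l-1)*x^2 - (l+1-m⁻¹)*x + 1 = 0 := by
        field_simp at e1 ⊢
        linear_combination e1
      have key : (2*(l-1)*x - (l+1-m⁻¹))^2 = Ddisc l m := by
        unfold Ddisc
        linear_combination (4*(l-1)) * hQ
      nlinarith [sq_nonneg (2*(l-1)*x - (l+1-m⁻¹))]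
    subst hy
    have hfac : (x - 1) * (l * x - 1) = 0 := by linear_combination e1
    rcases mul_eq_zero.mp hfac with h | h
    · left
      have : x = 1 := by linarith
      simp [this]
    · right
      have : x = 1 / l := by field_simp; linarith
      simp [this]
  · intro hD hm1 hml x y
    have hs : Real.sqrt (Ddisc l m) ^ 2 = Ddisc l m := Real.sq_sqrt hD
    constructor
    · rintro ⟨hp, hy⟩
      simp only [Phi, Prod.mk.injEq] at hp
      obtain ⟨e1, e2⟩ := hp
      have hxy : m * (x - y) - 1 = 0 := by
        have h0 : y * (m * (x - y) - 1) = 0 := by linear_combination e2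
        rcases mul_eq_zero.mp h0 with h | h
        · exact absurd h hy
        · exact h
      have hyv : y = x - 1/m := by
        field_simp
        field_simp at hxy
        linarith [hxy]
      refine ⟨hyv, ?_⟩
      rw [hyv] at e1
      have hQ : (l-1)*x^2 - (l+1-m⁻¹)*x + 1 = 0 := by
        field_simp at e1 ⊢
        linear_combination e1
      have h0 : (2*(1-l)*x - (m⁻¹-l-1) - Real.sqrt (Ddisc l m)) *
          (2*(1-l)*x - (m⁻¹-l-1) + Real.sqrt (Ddisc l m)) = 0 := by
        unfold Ddisc at hs ⊢
        linear_combination (4*(l-1)) * hQ - hs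
      have h2 : (2*(1-l) : ℝ) ≠ 0 := mul_ne_zero two_ne_zero h1l
      rcases mul_eq_zero.mp h0 with h | h
      · left
        rw [eq_div_iff h2]
        linarith
      · right
        rw [eq_div_iff h2]
        linarith
    · rintro ⟨hyv, hx⟩
      have h2 : (2*(1-l) : ℝ) ≠ 0 := mul_ne_zero two_ne_zero h1l
      have key : (2*(1-l)*x - (m⁻¹-l-1))^2 = Ddisc l m := by
        rcases hx with h | h
        · have hax : 2*(1-l)*x = m⁻¹ - l - 1 + Real.sqrt (Ddisc l m) := by
            rw [h, mul_div_cancel₀ _ h2]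
          linear_combination (2*(1-l)*x - (m⁻¹-l-1) + Real.sqrt (Ddisc l m)) * hax + hs
        · have hax : 2*(1-l)*x = m⁻¹ - l - 1 - Real.sqrt (Ddisc l m) := by
            rw [h, mul_div_cancel₀ _ h2]
          linear_combination (2*(1-l)*x - (m⁻¹-l-1) - Real.sqrt (Ddisc l m)) * hax + hs
      have hQ4 : (4*(l-1)) * ((l-1)*x^2 - (l+1-m⁻¹)*x + 1) = 0 := by
        unfold Ddisc at key
        linear_combination key
      have hQ : (l-1)*x^2 - (l+1-m⁻¹)*x + 1 = 0 := by
        have h4 : (4:ℝ)*(l-1) ≠ 0 := by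
          simp [hl1']
        exact (mul_eq_zero.mp hQ4).resolve_left h4
      have hy : y ≠ 0 := by
        intro hy0
        have hxm : x = 1/m := by rw [hy0] at hyv; linarith [hyv]
        rw [hxm] at hQ
        have hfac : (m - 1) * (m - l) = 0 := by
          have h2' : m^2 * ((m - 1) * (m - l)) = 0 := by
            field_simp at hQ
            linear_combination m^2 * hQ
          rcases mul_eq_zero.mp h2' with h | h
          · exact absurd h (pow_ne_zero 2 hm0)
          · exact h
        rcases mul_eq_zero.mp hfac with h | h
        · exact hm1 (by linarith)
        · exact hml (by linarith)
      refine ⟨?_, hy⟩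
      simp only [Phi, Prod.mk.injEq]
      constructor
      · rw [hyv]
        field_simp
        field_simp at hQ
        linear_combination hQ
      · rw [hyv]
        field_simp
        ring
end
end

section
/- Let λ > 0 and μ > 0. For every point p ∈ ℝ², the preimage Φ_{λ,μ}⁻¹({p}) is a finite set containing at most four points. -/
noncomputable section

open Polynomial

lemma rootset_aux (P : Polynomial ℝ) (hP : P ≠ 0) :
    {x : ℝ | P.eval x = 0}.Finite ∧ {x : ℝ | P.eval x = 0}.ncard ≤ P.natDegree := by
  have he : {x : ℝ | P.eval x = 0} = ↑P.roots.toFinset := by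
    ext x; simp [Polynomial.mem_roots, hP, Polynomial.IsRoot]
  refine ⟨he ▸ (P.roots.toFinset).finite_toSet, ?_⟩
  rw [he, Set.ncard_coe_finset]
  exact (Multiset.toFinset_card_le _).trans P.card_roots'

lemma inj_bound {α β : Type*} (s : Set α) (t : Set β) (f : α → β)
    (hmap : ∀ a ∈ s, f a ∈ t) (hinj : Set.InjOn f s) (ht : t.Finite) :
    s.Finite ∧ s.ncard ≤ t.ncard :=
  ⟨Set.Finite.of_finite_image (ht.subset (Set.image_subset_iff.mpr hmap)) hinj,
    Set.ncard_le_ncard_of_injOn f hmap hinj ht⟩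

/-- For λ > 0, μ > 0, the preimage of any point under Φ_{λ,μ} is a finite set with at
most four points. -/
theorem stmt_8 (l m : ℝ) (hl : 0 < l) (hm : 0 < m) (p : ℝ × ℝ) :
    (Phi l m ⁻¹' {p}).Finite ∧ (Phi l m ⁻¹' {p}).ncard ≤ 4 := by
  set c : ℝ := 1 - p.1 with hcdef
  set b : ℝ := p.2 with hbdef
  set S : Set (ℝ × ℝ) := Phi l m ⁻¹' {p} with hSdef
  have hmem : ∀ s : ℝ × ℝ, s ∈ S ↔
      (1 - s.1 * (l * (1 - s.1) + s.2) = p.1 ∧ m * s.2 * (s.1 - s.2) = p.2) := by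
    intro s
    simp [hSdef, Phi, Prod.ext_iff]
  by_cases hc : c = 0
  · -- p.1 = 1 case
    set S0 : Set (ℝ × ℝ) := S ∩ {s | s.1 = 0} with hS0
    set S1 : Set (ℝ × ℝ) := S ∩ {s | s.1 ≠ 0} with hS1
    have hSu : S = S0 ∪ S1 := by
      ext s; by_cases h : s.1 = 0 <;> simp [hS0, hS1, h]
    -- bound S0 via Q0 = m X^2 + b
    set Q0 : Polynomial ℝ := C m * X ^ 2 + C b with hQ0
    have hQ0ne : Q0 ≠ 0 := by
      intro h
      have e0 : Q0.eval 0 = 0 := by rw [h]; simp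
      have e1 : Q0.eval 1 = 0 := by rw [h]; simp
      rw [hQ0] at e0 e1
      simp at e0 e1
      nlinarith
    have hQ0deg : Q0.natDegree ≤ 2 := by
      rw [hQ0]; compute_degree
    obtain ⟨hfin0, hcard0⟩ := rootset_aux Q0 hQ0ne
    have h0 : S0.Finite ∧ S0.ncard ≤ {y : ℝ | Q0.eval y = 0}.ncard := by
      apply inj_bound S0 _ (fun s => s.2) _ _ hfin0
      · rintro s ⟨hsS, hs0⟩
        obtain ⟨h1, h2⟩ := (hmem s).1 hsS
        simp only [Set.mem_setOf_eq] at hs0 ⊢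
        rw [hs0] at h2
        simp [hQ0]
        linear_combination -h2
      · rintro s ⟨hsS, hs0⟩ t ⟨htS, ht0⟩ hst
        simp only [Set.mem_setOf_eq] at hs0 ht0
        exact Prod.ext (by rw [hs0, ht0]) hst
    -- bound S1 via Q1
    set Q1 : Polynomial ℝ := C (m * l * (1 - l)) * X ^ 2 + C (m * l * (2 * l - 1)) * X
        + C (-(m * l * l) - b) with hQ1
    have hQ1ne : Q1 ≠ 0 := by
      intro h
      have e0 : Q1.eval 0 = 0 := by rw [h]; simp
      have e1 : Q1.eval 1 = 0 := by rw [h]; simp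
      have e2 : Q1.eval (-1) = 0 := by rw [h]; simp
      rw [hQ1] at e0 e1 e2
      simp at e0 e1 e2
      have hA : m * l * (1 - l) = 0 := by nlinarith
      have hB : m * l * (2 * l - 1) = 0 := by nlinarith
      nlinarith
    have hQ1deg : Q1.natDegree ≤ 2 := by
      rw [hQ1]; compute_degree
    obtain ⟨hfin1, hcard1⟩ := rootset_aux Q1 hQ1ne
    have hy1 : ∀ s ∈ S1, s.2 = l * s.1 - l := by
      rintro s ⟨hsS, hs0⟩
      obtain ⟨h1, h2⟩ := (hmem s).1 hsS
      simp only [Set.mem_setOf_eq] at hs0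
      have hx : s.1 * (l * (1 - s.1) + s.2) = 0 := by
        have : (1:ℝ) - p.1 = 0 := hc
        linarith [h1]
      rcases mul_eq_zero.1 hx with h | h
      · exact absurd h hs0
      · linarith
    have h1b : S1.Finite ∧ S1.ncard ≤ {x : ℝ | Q1.eval x = 0}.ncard := by
      apply inj_bound S1 _ (fun s => s.1) _ _ hfin1
      · rintro s hs
        obtain ⟨hsS, hs0⟩ := hs
        obtain ⟨h1, h2⟩ := (hmem s).1 hsS
        have hy := hy1 s ⟨hsS, hs0⟩
        simp only [Set.mem_setOf_eq]
        simp [hQ1]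
        linear_combination h2 + (m * s.2 + m * (l * s.1 - l) - m * s.1) * hy
      · rintro s hs t ht hst
        have hst' : s.1 = t.1 := hst
        have hys := hy1 s hs
        have hyt := hy1 t ht
        exact Prod.ext hst' (by rw [hys, hyt, hst'])
    constructor
    · rw [hSu]; exact h0.1.union h1b.1
    · rw [hSu]
      calc (S0 ∪ S1).ncard ≤ S0.ncard + S1.ncard := Set.ncard_union_le S0 S1
        _ ≤ 2 + 2 := by
            gcongr
            · exact h0.2.trans (hcard0.trans hQ0deg)
            · exact h1b.2.trans (hcard1.trans hQ1deg)
        _ = 4 := by norm_num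
  · -- c ≠ 0 case: every solution has x ≠ 0 and is determined by x, root of quartic
    set P : Polynomial ℝ := C (m * l * (1 - l)) * X ^ 4 + C (m * l * (2 * l - 1)) * X ^ 3
        + C (m * (c - l ^ 2 - 2 * l * c) - b) * X ^ 2 + C (2 * m * l * c) * X
        + C (-(m * c ^ 2)) with hP
    have hPne : P ≠ 0 := by
      intro h
      have e0 : P.eval 0 = 0 := by rw [h]; simp
      rw [hP] at e0
      simp at e0
      rcases e0 with h' | h'
      · exact hm.ne' h'
      · exact hc h'
    have hPdeg : P.natDegree ≤ 4 := by
      rw [hP]; compute_degree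
    obtain ⟨hfinP, hcardP⟩ := rootset_aux P hPne
    have hxy : ∀ s ∈ S, s.1 * s.2 = c - l * s.1 + l * s.1 ^ 2 := by
      intro s hs
      obtain ⟨h1, h2⟩ := (hmem s).1 hs
      have : c = 1 - p.1 := hcdef
      linear_combination -h1 + this
    have hxne : ∀ s ∈ S, s.1 ≠ 0 := by
      intro s hs h0
      have := hxy s hs
      rw [h0] at this
      simp at this
      exact hc (by linarith)
    have hb : S.Finite ∧ S.ncard ≤ {x : ℝ | P.eval x = 0}.ncard := by
      apply inj_bound S _ (fun s => s.1) _ _ hfinP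
      · intro s hs
        obtain ⟨h1, h2⟩ := (hmem s).1 hs
        have hxys := hxy s hs
        simp only [Set.mem_setOf_eq]
        simp [hP]
        linear_combination s.1 ^ 2 * h2
          + (m * (c - l * s.1 + l * s.1 ^ 2) + m * (s.1 * s.2) - m * s.1 ^ 2) * hxys
      · intro s hs t ht hst
        have hst' : s.1 = t.1 := hst
        have hxs := hxy s hs
        have hxt := hxy t ht
        have hne := hxne s hs
        refine Prod.ext hst' ?_
        have : s.1 * s.2 = s.1 * t.2 := by rw [hxs, hst', ← hxt]
        exact mul_left_cancel₀ hne this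
    exact ⟨hb.1, hb.2.trans (hcardP.trans hPdeg)⟩
end
end

section
/- Let 0 < λ < 1 and let μ be real. For every x with 0 ≤ x < 1/λ, the iterates Φ_{λ,μ}ⁿ(x, 0) converge to the fixed point (1, 0) as n → ∞. -/
noncomputable section

private def f1 (l : ℝ) (a : ℝ) : ℝ := 1 - a * (l * (1 - a))

private lemma iter_eq (l m x : ℝ) (n : ℕ) :
    (Phi l m)^[n] (x, 0) = ((f1 l)^[n] x, 0) := by
  induction n with
  | zero => simp
  | succ n ih =>
    rw [Function.iterate_succ_apply', Function.iterate_succ_apply', ih]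
    simp [Phi, f1]

/-- For 0 < λ < 1 and any real μ: for every 0 ≤ x < 1/λ the iterates Φ_{λ,μ}ⁿ(x,0)
converge to the fixed point (1,0). -/
theorem stmt_11 (l m x : ℝ) (hl0 : 0 < l) (hl1 : l < 1) (hx0 : 0 ≤ x)
    (hx1 : x < 1 / l) :
    Filter.Tendsto (fun n : ℕ => (Phi l m)^[n] (x, 0)) Filter.atTop
      (nhds ((1 : ℝ), (0 : ℝ))) := by
  set M : ℝ := max 1 x with hM
  have hM1 : 1 ≤ M := le_max_left _ _
  have hxM : x ≤ M := le_max_right _ _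
  have hMl : l * M < 1 := by
    rcases max_cases 1 x with ⟨h, _⟩ | ⟨h, _⟩
    · rw [hM, h]; linarith
    · rw [hM, h]
      have := (lt_div_iff₀ hl0).mp hx1
      linarith
  set c : ℝ := l * M with hc
  have hc0 : 0 ≤ c := by positivity
  have hc1 : c < 1 := hMl
  have key : ∀ n : ℕ, 0 ≤ (f1 l)^[n] x ∧ (f1 l)^[n] x ≤ M ∧
      |(f1 l)^[n] x - 1| ≤ c ^ n * |x - 1| := by
    intro n
    induction n with
    | zero => simp [hx0, hxM]
    | succ n ih =>
      obtain ⟨h0, hMn, habs⟩ := ih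
      set a : ℝ := (f1 l)^[n] x with ha
      rw [Function.iterate_succ_apply']
      have hfa : f1 l a - 1 = l * a * (a - 1) := by simp [f1]; ring
      have hla : l * a ≤ c := by
        have := mul_le_mul_of_nonneg_left hMn hl0.le
        linarith
      refine ⟨?_, ?_, ?_⟩
      · -- nonneg
        rcases le_or_gt a 1 with h | h
        · have h1 : a * (1 - a) ≤ 1 / 4 := by nlinarith [sq_nonneg (2 * a - 1)]
          have h2 : l * (a * (1 - a)) ≤ 1 := by nlinarith
          have : f1 l a - 1 = -(l * (a * (1 - a))) := by rw [hfa]; ring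
          linarith
        · have h2 : 0 ≤ l * a * (a - 1) :=
            mul_nonneg (mul_nonneg hl0.le h0) (by linarith)
          linarith [hfa]
      · -- ≤ M
        rcases le_or_gt a 1 with h | h
        · have h2 : 0 ≤ l * a * (1 - a) :=
            mul_nonneg (mul_nonneg hl0.le h0) (by linarith)
          have : f1 l a - 1 = -(l * a * (1 - a)) := by rw [hfa]; ring
          linarith
        · have h1 : f1 l a - 1 = l * a * (a - 1) := hfa
          have h2 : l * a * (a - 1) ≤ 1 * (a - 1) := by
            apply mul_le_mul_of_nonneg_right _ (by linarith)
            linarith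
          linarith
      · -- contraction
        have h1 : |f1 l a - 1| = l * a * |a - 1| := by
          rw [hfa, abs_mul, abs_of_nonneg (by positivity : (0:ℝ) ≤ l * a)]
        rw [h1, pow_succ]
        calc l * a * |a - 1| ≤ c * |a - 1| :=
              mul_le_mul_of_nonneg_right hla (abs_nonneg _)
          _ ≤ c * (c ^ n * |x - 1|) := mul_le_mul_of_nonneg_left habs hc0
          _ = c ^ n * c * |x - 1| := by ring
  have htend : Filter.Tendsto (fun n : ℕ => (f1 l)^[n] x) Filter.atTop (nhds 1) := by
    rw [tendsto_iff_dist_tendsto_zero]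
    have hb : Filter.Tendsto (fun n : ℕ => c ^ n * |x - 1|) Filter.atTop (nhds 0) := by
      have := (tendsto_pow_atTop_nhds_zero_of_lt_one hc0 hc1).mul_const |x - 1|
      simpa using this
    refine squeeze_zero (fun n => dist_nonneg) (fun n => ?_) hb
    rw [Real.dist_eq]
    exact (key n).2.2
  have : Filter.Tendsto (fun n : ℕ => ((f1 l)^[n] x, (0:ℝ))) Filter.atTop
      (nhds ((1:ℝ), (0:ℝ))) := htend.prodMk_nhds tendsto_const_nhds
  simpa [iter_eq] using this
end
end
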